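/- Let X ⊂ ℝ^d be the vertex set of a (d−1)-dimensional hypercube, namely X = {0,1}^{d−1} × {0}, and let x ∈ X be an arbitrary vertex. Then for every ε > 0 there exists a point x' ∈ ℝ^d with |x − x'| ≤ ε such that for any two distinct points y, z ∈ X \ {x}, both the angle ∠x'yz (at y) and the angle ∠yx'z (at x') are strictly less than π/2. -/

import Mathlib

open InnerProductGeometry RealInnerProductSpace Finset

private lemma aux_angle_lt_of_inner_pos {n : ℕ} {u v : EuclideanSpace ℝ (Fin n)}
    (h : 0 < ⟪u, v⟫) : InnerProductGeometry.angle u v < Real.pi / 2 := by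
  rw [InnerProductGeometry.angle, Real.arccos_lt_pi_div_two]
  have hu : u ≠ 0 := by rintro rfl; simp at h
  have hv : v ≠ 0 := by rintro rfl; simp at h
  exact div_pos h (mul_pos (norm_pos_iff.2 hu) (norm_pos_iff.2 hv))

/-- The vertex set `{0,1}^(d-1) × {0}` of the `(d-1)`-dimensional unit hypercube
embedded in `ℝ^d` with last coordinate `0`. -/
def hypercube (d : ℕ) : Set (EuclideanSpace ℝ (Fin d)) :=
  {v | ∀ i : Fin d, if (i : ℕ) = d - 1 then v i = 0 else v i = 0 ∨ v i = 1}

set_option maxHeartbeats 1600000 in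
/-- One vertex `x` of the hypercube `X = {0,1}^(d-1) × {0} ⊂ ℝ^d` can be moved by an
arbitrarily small distance `ε` to a point `x'` so that every angle `∠x'yz` (at `y`) and
`∠yx'z` (at `x'`) with distinct `y, z ∈ X \ {x}` is acute. -/
theorem exists_perturbation_of_vertex (d : ℕ) (hd : 2 ≤ d)
    (x : EuclideanSpace ℝ (Fin d)) (hx : x ∈ hypercube d) (ε : ℝ) (hε : 0 < ε) :
    ∃ x' : EuclideanSpace ℝ (Fin d), dist x x' ≤ ε ∧
      ∀ y ∈ hypercube d, ∀ z ∈ hypercube d, y ≠ x → z ≠ x → y ≠ z →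
        EuclideanGeometry.angle x' y z < Real.pi / 2 ∧
        EuclideanGeometry.angle y x' z < Real.pi / 2 := by
  classical
  have hd2 : (2:ℝ) ≤ (d:ℝ) := by exact_mod_cast hd
  have hdpos : (0:ℝ) < (d:ℝ) := by linarith
  set δ' : ℝ := min (ε/2) 1 with hδ'def
  have hδ'pos : 0 < δ' := lt_min (by linarith) one_pos
  have hδ'le1 : δ' ≤ 1 := min_le_right _ _
  have hδ'leε : δ' ≤ ε/2 := min_le_left _ _
  set δ : ℝ := δ'^2 / d with hδdef
  have hδpos : 0 < δ := div_pos (by positivity) hdpos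
  have hδd : δ * d = δ'^2 := div_mul_cancel₀ _ hdpos.ne'
  have hδle : δ ≤ 1/2 := by
    rw [hδdef, div_le_iff₀ hdpos]; nlinarith
  set lst : Fin d := ⟨d-1, by omega⟩ with hlst
  have hcast : ∀ i : Fin d, (i : ℕ) = d - 1 ↔ i = lst := by
    intro i; constructor
    · intro h; exact Fin.ext h
    · rintro rfl; rfl
  -- unpack hypercube membership
  have hmem : ∀ v ∈ hypercube d, v lst = 0 ∧ ∀ i : Fin d, i ≠ lst → v i = 0 ∨ v i = 1 := by
    intro v hv
    have hv' : ∀ i : Fin d, if (i : ℕ) = d - 1 then v i = 0 else v i = 0 ∨ v i = 1 := hv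
    constructor
    · have := hv' lst; rwa [if_pos rfl] at this
    · intro i hi
      have := hv' i
      rwa [if_neg (fun h => hi (Fin.ext h))] at this
  obtain ⟨hxlst, hx01⟩ := hmem x hx
  set x' : EuclideanSpace ℝ (Fin d) :=
    WithLp.toLp 2 (fun i => if i = lst then δ' else x i + δ * (1/2 - x i)) with hx'def
  have hx'lst : x' lst = δ' := by simp [hx'def]
  have hx'i : ∀ i : Fin d, i ≠ lst → x' i = x i + δ * (1/2 - x i) := by
    intro i hi; simp [hx'def, hi]
  have hx'bound : ∀ i : Fin d, i ≠ lst → 0 < x' i ∧ x' i < 1 := by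
    intro i hi
    rw [hx'i i hi]
    rcases hx01 i hi with h | h <;> rw [h] <;> constructor <;> nlinarith
  refine ⟨x', ?_, ?_⟩
  · -- distance bound
    have hdist : dist x x' = Real.sqrt (∑ i, dist (x i) (x' i) ^ 2) :=
      EuclideanSpace.dist_eq x x'
    rw [hdist]
    have hsum : ∑ i, dist (x i) (x' i) ^ 2 ≤ ε ^ 2 := by
      have hsplit : ∑ i, dist (x i) (x' i) ^ 2
          = dist (x lst) (x' lst) ^ 2 + ∑ i ∈ univ.erase lst, dist (x i) (x' i) ^ 2 :=
        (Finset.add_sum_erase _ _ (mem_univ lst)).symm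
      rw [hsplit]
      have h1 : dist (x lst) (x' lst) ^ 2 = δ'^2 := by
        rw [hxlst, hx'lst, Real.dist_eq, sq_abs]; ring
      have h2 : ∀ i ∈ univ.erase lst, dist (x i) (x' i) ^ 2 = δ^2 / 4 := by
        intro i hi
        have hine : i ≠ lst := (Finset.mem_erase.1 hi).1
        rw [Real.dist_eq, sq_abs, hx'i i hine]
        rcases hx01 i hine with h | h <;> rw [h] <;> ring
      rw [Finset.sum_congr rfl h2, Finset.sum_const, Finset.card_erase_of_mem (mem_univ lst),
        Finset.card_univ, Fintype.card_fin, nsmul_eq_mul]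
      have hcard : ((d - 1 : ℕ) : ℝ) ≤ (d : ℝ) := by
        exact_mod_cast Nat.sub_le d 1
      have hcard0 : (0:ℝ) ≤ ((d - 1 : ℕ) : ℝ) := Nat.cast_nonneg _
      have hsq1 : δ'^2 ≤ 1 := by nlinarith
      have h4 : δ'^4 ≤ δ'^2 := by nlinarith
      have hdd : (d:ℝ) * δ^2 ≤ δ'^2 := by
        have he : (d:ℝ) * δ^2 = δ'^4 / d := by rw [hδdef]; field_simp
        rw [he, div_le_iff₀ hdpos]; nlinarith
      have hεδ : δ'^2 ≤ (ε/2)^2 := by nlinarith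
      nlinarith [mul_le_mul_of_nonneg_right hcard (sq_nonneg δ)]
    calc Real.sqrt (∑ i, dist (x i) (x' i) ^ 2) ≤ Real.sqrt (ε^2) := Real.sqrt_le_sqrt hsum
      _ = ε := Real.sqrt_sq hε.le
  · intro y hy z hz hyx hzx hyz
    obtain ⟨hylst, hy01⟩ := hmem y hy
    obtain ⟨hzlst, hz01⟩ := hmem z hz
    constructor
    · -- angle at y
      apply aux_angle_lt_of_inner_pos
      simp only [vsub_eq_sub]
      have hinner : ⟪x' - y, z - y⟫ = ∑ i, (x' i - y i) * (z i - y i) := by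
        simp [PiLp.inner_apply, RCLike.inner_apply]
        exact Finset.sum_congr rfl (fun i _ => mul_comm _ _)
      rw [hinner]
      apply Finset.sum_pos'
      · intro i _
        by_cases hi : i = lst
        · subst hi; rw [hylst, hzlst]; ring_nf; simp
        · obtain ⟨hl, hr⟩ := hx'bound i hi
          rcases hy01 i hi with h1 | h1 <;> rcases hz01 i hi with h2 | h2 <;>
            rw [h1, h2] <;> nlinarith
      · -- exists a positive term
        have : ∃ i, y i ≠ z i := by
          by_contra h
          push_neg at h
          exact hyz (PiLp.ext h)
        obtain ⟨i, hi⟩ := this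
        have hine : i ≠ lst := by
          rintro rfl; rw [hylst, hzlst] at hi; exact hi rfl
        refine ⟨i, mem_univ i, ?_⟩
        obtain ⟨hl, hr⟩ := hx'bound i hine
        rcases hy01 i hine with h1 | h1 <;> rcases hz01 i hine with h2 | h2 <;>
          rw [h1, h2] <;> first | (exfalso; rw [h1, h2] at hi; exact hi rfl) | nlinarith
    · -- angle at x'
      apply aux_angle_lt_of_inner_pos
      simp only [vsub_eq_sub]
      have hinner : ⟪y - x', z - x'⟫ = ∑ i, (y i - x' i) * (z i - x' i) := by
        simp [PiLp.inner_apply, RCLike.inner_apply]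
        exact Finset.sum_congr rfl (fun i _ => mul_comm _ _)
      rw [hinner]
      have hsplit : ∑ i, (y i - x' i) * (z i - x' i)
          = (y lst - x' lst) * (z lst - x' lst)
            + ∑ i ∈ univ.erase lst, (y i - x' i) * (z i - x' i) :=
        (Finset.add_sum_erase _ _ (mem_univ lst)).symm
      rw [hsplit, hylst, hzlst, hx'lst]
      have hbound : ∀ i ∈ univ.erase lst, -(δ/2) ≤ (y i - x' i) * (z i - x' i) := by
        intro i hi
        have hine : i ≠ lst := (Finset.mem_erase.1 hi).1
        rw [hx'i i hine]
        rcases hx01 i hine with h0 | h0 <;> rcases hy01 i hine with h1 | h1 <;>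
          rcases hz01 i hine with h2 | h2 <;> rw [h0, h1, h2] <;> nlinarith
      have hsum2 : ((univ.erase lst).card : ℝ) * (-(δ/2))
          ≤ ∑ i ∈ univ.erase lst, (y i - x' i) * (z i - x' i) := by
        calc ((univ.erase lst).card : ℝ) * (-(δ/2))
            = ∑ _i ∈ univ.erase lst, (-(δ/2)) := by rw [Finset.sum_const, nsmul_eq_mul]
          _ ≤ _ := Finset.sum_le_sum hbound
      have hcard : ((univ.erase lst).card : ℝ) ≤ (d : ℝ) := by
        rw [Finset.card_erase_of_mem (mem_univ lst), Finset.card_univ, Fintype.card_fin]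
        exact_mod_cast Nat.sub_le d 1
      have : -(δ'^2/2) ≤ ∑ i ∈ univ.erase lst, (y i - x' i) * (z i - x' i) := by
        refine le_trans ?_ hsum2
        have : ((univ.erase lst).card : ℝ) * (δ/2) ≤ (d:ℝ) * (δ/2) :=
          mul_le_mul_of_nonneg_right hcard (by linarith)
        nlinarith
      nlinarith
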